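/- Let G be a graph obtained from a graph G1 and a triangle (3-cycle) G2 by gluing them along an edge, and suppose G1 has a NAC-colouring c1. Then the colouring of G that agrees with c1 on G1 and colours both new edges of the triangle with the colour c1 gives to the shared edge is a NAC-colouring of G. -/

import Mathlib

open scoped Classical

namespace NAC

variable {V : Type*}

/-- Number of edges of `G` in the list `l` whose colour under `c` is `b`. -/
noncomputable def cCount (G : SimpleGraph V) (c : G.edgeSet → Bool) (b : Bool)
    (l : List (Sym2 V)) : ℕ :=
  (l.filter fun e => decide (∃ h : e ∈ G.edgeSet, c ⟨e, h⟩ = b)).length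

/-- `c` is a NAC-colouring of `G`: it is surjective (both colours are used) and no
cycle of `G` contains exactly one edge of either colour. -/
def IsNAC (G : SimpleGraph V) (c : G.edgeSet → Bool) : Prop :=
  Function.Surjective c ∧
  ∀ ⦃u : V⦄ (w : G.Walk u u), w.IsCycle →
    cCount G c true w.edges ≠ 1 ∧ cCount G c false w.edges ≠ 1

/-- The number of NAC-colourings of `G`, divided by two. -/
noncomputable def nacNum (G : SimpleGraph V) : ℕ :=
  {c : G.edgeSet → Bool | IsNAC G c}.ncard / 2

end NAC

namespace NAC

/-- The graph obtained from `G1` by gluing a triangle along the edge `uv`: a new vertex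
(`none`) is added, adjacent to `u` and `v`. -/
def glueTri (G1 : SimpleGraph V) (u v : V) : SimpleGraph (Option V) where
  Adj x y :=
    match x, y with
    | some a, some b => G1.Adj a b
    | some a, none => a = u ∨ a = v
    | none, some b => b = u ∨ b = v
    | none, none => False
  symm := by
    refine ⟨?_⟩
    rintro (_ | a) (_ | b) h
    · exact h
    · exact h
    · exact h
    · exact h.symm
  loopless := by
    refine ⟨?_⟩
    rintro (_ | a) h
    · exact h
    · exact G1.irrefl h

end NAC

namespace NAC

variable {V : Type*}

/-- The embedding of `G1` into the gluing. -/
def glueHom (G1 : SimpleGraph V) (u v : V) : G1 →g glueTri G1 u v where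
  toFun := some
  map_rel' := fun h => h

lemma cCount_eq_countP (G : SimpleGraph V) (c : G.edgeSet → Bool) (b : Bool)
    (l : List (Sym2 V)) :
    cCount G c b l = l.countP (fun e => decide (∃ h : e ∈ G.edgeSet, c ⟨e, h⟩ = b)) :=
  List.countP_eq_length_filter.symm

lemma pull {G1 : SimpleGraph V} {u v : V} :
    ∀ {x y : Option V} (p : (glueTri G1 u v).Walk x y), none ∉ p.support →
      ∀ (a b : V) (hx : x = some a) (hy : y = some b),
      ∃ p' : G1.Walk a b, (p'.map (glueHom G1 u v)).copy
        (show (glueHom G1 u v) a = some a from rfl)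
        (show (glueHom G1 u v) b = some b from rfl) = p.copy hx hy := by
  intro x y p
  induction p with
  | nil =>
    rintro _ a b rfl h
    obtain rfl : a = b := by injection h
    exact ⟨SimpleGraph.Walk.nil, rfl⟩
  | @cons x z y h q ih =>
    rintro hn a b rfl rfl
    simp only [SimpleGraph.Walk.support_cons, List.mem_cons] at hn
    push_neg at hn
    obtain ⟨hn1, hn2⟩ := hn
    obtain ⟨z', rfl⟩ : ∃ z', z = some z' := by
      cases z with
      | none => exact absurd q.start_mem_support hn2
      | some z' => exact ⟨z', rfl⟩
    obtain ⟨q', hq'⟩ := ih hn2 z' b rfl rfl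
    simp only [SimpleGraph.Walk.copy_rfl_rfl] at hq'
    exact ⟨SimpleGraph.Walk.cons h q', by
      subst hq'; rfl⟩

lemma path_edge {G : SimpleGraph V} {a b : V} (p : G.Walk a b) (hp : p.IsPath)
    (he : s(b, a) ∈ p.edges) : p.edges = [s(a, b)] := by
  cases p with
  | nil => simp at he
  | @cons _ x _ h q =>
    rw [SimpleGraph.Walk.cons_isPath_iff] at hp
    rw [SimpleGraph.Walk.edges_cons, List.mem_cons] at he
    rcases he with he | he
    · rw [Sym2.eq_iff] at he
      rcases he with ⟨rfl, rfl⟩ | ⟨rfl, -⟩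
      · exact absurd rfl h.ne
      · obtain rfl := (SimpleGraph.Walk.isPath_iff_eq_nil (p := q)).mp hp.1
        simp
    · exact absurd (SimpleGraph.Walk.snd_mem_support_of_mem_edges q he) hp.2

lemma count_map (G1 : SimpleGraph V) (u v : V)
    (c1 : G1.edgeSet → Bool) (c : (glueTri G1 u v).edgeSet → Bool)
    (hold : ∀ (a b : V) (h : (glueTri G1 u v).Adj (some a) (some b)) (h1 : G1.Adj a b),
      c ⟨s(some a, some b), (glueTri G1 u v).mem_edgeSet.mpr h⟩
        = c1 ⟨s(a, b), G1.mem_edgeSet.mpr h1⟩)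
    (b : Bool) (l : List (Sym2 V)) :
    cCount (glueTri G1 u v) c b (l.map (Sym2.map some)) = cCount G1 c1 b l := by
  rw [cCount_eq_countP, cCount_eq_countP, List.countP_map]
  refine List.countP_congr fun e _ => ?_
  induction e using Sym2.ind with
  | _ x y =>
    simp only [Function.comp_apply, Sym2.map_pair_eq, decide_eq_true_eq]
    constructor
    · rintro ⟨h, hc⟩
      have h1 : G1.Adj x y := h
      exact ⟨G1.mem_edgeSet.mpr h1, by rw [← hold x y h1 h1]; exact hc⟩
    · rintro ⟨h, hc⟩
      have h1 : G1.Adj x y := h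
      exact ⟨(glueTri G1 u v).mem_edgeSet.mpr h1, by rw [hold x y h1 h1]; exact hc⟩

end NAC

open NAC in
theorem statement7 {V : Type*} (G1 : SimpleGraph V) (u v : V) (huv : G1.Adj u v)
    (c1 : G1.edgeSet → Bool) (hc1 : IsNAC G1 c1)
    (c : (glueTri G1 u v).edgeSet → Bool)
    (hold : ∀ (a b : V) (h : (glueTri G1 u v).Adj (some a) (some b)) (h1 : G1.Adj a b),
      c ⟨s(some a, some b), (glueTri G1 u v).mem_edgeSet.mpr h⟩
        = c1 ⟨s(a, b), G1.mem_edgeSet.mpr h1⟩)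
    (hnew : ∀ (a : V) (h : (glueTri G1 u v).Adj none (some a)),
      c ⟨s(none, some a), (glueTri G1 u v).mem_edgeSet.mpr h⟩
        = c1 ⟨s(u, v), G1.mem_edgeSet.mpr huv⟩) :
    IsNAC (glueTri G1 u v) c := by
  classical
  constructor
  · -- surjectivity
    intro b
    obtain ⟨⟨e, he⟩, hce⟩ := hc1.1 b
    revert he hce
    induction e using Sym2.ind with
    | _ x y =>
      intro he hce
      have h1 : G1.Adj x y := he
      refine ⟨⟨s(some x, some y), (glueTri G1 u v).mem_edgeSet.mpr h1⟩, ?_⟩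
      rw [hold x y h1 h1]
      exact hce
  · -- cycles
    have key : ∀ (w2 : (glueTri G1 u v).Walk none none), w2.IsCycle →
        ∀ b, cCount (glueTri G1 u v) c b w2.edges ≠ 1 := by
      intro w2 hw2 b
      cases w2 with
      | nil => exact absurd rfl hw2.ne_nil
      | @cons _ z _ h q =>
        cases z with
        | none => exact (h : False).elim
        | some z₁ =>
          have hz1 : z₁ = u ∨ z₁ = v := h
          have hne : (none : Option V) ≠ some z₁ := by simp
          obtain ⟨x, h2, r, hqr⟩ := SimpleGraph.Walk.exists_eq_cons_of_ne hne q.reverse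
          cases x with
          | none => exact (h2 : False).elim
          | some z₄ =>
            have hz4 : z₄ = u ∨ z₄ = v := h2
            have hq : q = (SimpleGraph.Walk.cons h2 r).reverse := by
              rw [← hqr, SimpleGraph.Walk.reverse_reverse]
            subst hq
            rw [SimpleGraph.Walk.cons_isCycle_iff] at hw2
            obtain ⟨hqpath, hqedge⟩ := hw2
            have hrpath0 : (SimpleGraph.Walk.cons h2 r).IsPath := by
              have := hqpath.reverse
              rwa [SimpleGraph.Walk.reverse_reverse] at this
            rw [SimpleGraph.Walk.cons_isPath_iff] at hrpath0
            obtain ⟨hrpath, hnr⟩ := hrpath0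
            have hz14 : z₁ ≠ z₄ := by
              rintro rfl
              apply hqedge
              rw [SimpleGraph.Walk.edges_reverse, List.mem_reverse]
              simp
            obtain ⟨p', hp'⟩ := pull r hnr z₄ z₁ rfl rfl
            simp only [SimpleGraph.Walk.copy_rfl_rfl] at hp'
            have hredges : r.edges = p'.edges.map (Sym2.map some) := by
              rw [← hp', SimpleGraph.Walk.edges_copy, SimpleGraph.Walk.edges_map]; rfl
            have hppath : p'.IsPath := by
              rw [← hp'] at hrpath
              exact (SimpleGraph.Walk.map_isPath_iff_of_injective
                (f := glueHom G1 u v) (Option.some_injective V)).mp hrpath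
            have hadj : G1.Adj z₁ z₄ := by
              rcases hz1 with rfl | rfl <;> rcases hz4 with rfl | rfl
              · exact absurd rfl hz14
              · exact huv
              · exact huv.symm
              · exact absurd rfl hz14
            have hsuv : s(z₁, z₄) = s(u, v) := by
              rcases hz1 with rfl | rfl <;> rcases hz4 with rfl | rfl
              · exact absurd rfl hz14
              · rfl
              · exact Sym2.eq_swap
              · exact absurd rfl hz14
            -- value of the predicate on the new edges
            have hv1 : ∀ (z : V) (hz : (glueTri G1 u v).Adj none (some z)),
                (decide (∃ h : s(none, some z) ∈ (glueTri G1 u v).edgeSet,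
                  c ⟨s(none, some z), h⟩ = b)) = decide (c1 ⟨s(u, v), G1.mem_edgeSet.mpr huv⟩ = b) := by
              intro z hz
              rw [decide_eq_decide]
              constructor
              · rintro ⟨_, hc⟩
                rw [← hnew z hz]
                exact hc
              · intro hb
                exact ⟨(glueTri G1 u v).mem_edgeSet.mpr hz, by rw [hnew z hz]; exact hb⟩
            have hperm : List.Perm ((SimpleGraph.Walk.cons h
                (SimpleGraph.Walk.cons h2 r).reverse).edges)
                (s(none, some z₁) :: s(none, some z₄) :: r.edges) := by
              rw [SimpleGraph.Walk.edges_cons, SimpleGraph.Walk.edges_reverse,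
                SimpleGraph.Walk.edges_cons]
              exact List.Perm.cons _ (List.reverse_perm _)
            rw [cCount_eq_countP, hperm.countP_eq]
            simp only [List.countP_cons]
            have hcr : List.countP
                (fun e => decide (∃ h : e ∈ (glueTri G1 u v).edgeSet, c ⟨e, h⟩ = b))
                r.edges = cCount G1 c1 b p'.edges := by
              rw [hredges, ← cCount_eq_countP, count_map G1 u v c1 c hold]
            rw [hcr, hv1 z₁ h, hv1 z₄ h2]
            by_cases htri : s(z₁, z₄) ∈ p'.edges
            · -- triangle case
              have hedges1 : p'.edges = [s(z₄, z₁)] := path_edge p' hppath htri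
              have hsvu : s(z₄, z₁) = s(u, v) := by rw [Sym2.eq_swap]; exact hsuv
              have hn1 : cCount G1 c1 b p'.edges = if c1 ⟨s(u, v), G1.mem_edgeSet.mpr huv⟩ = b then 1 else 0 := by
                rw [hedges1, cCount_eq_countP]
                simp only [List.countP_cons, List.countP_nil]
                have : (decide (∃ h : s(z₄, z₁) ∈ G1.edgeSet, c1 ⟨s(z₄, z₁), h⟩ = b))
                    = decide (c1 ⟨s(u, v), G1.mem_edgeSet.mpr huv⟩ = b) := by
                  rw [decide_eq_decide]
                  constructor
                  · rintro ⟨hm, hc⟩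
                    have he : (⟨s(z₄, z₁), hm⟩ : G1.edgeSet)
                        = ⟨s(u, v), G1.mem_edgeSet.mpr huv⟩ := Subtype.ext hsvu
                    rw [← he]
                    exact hc
                  · intro hb
                    refine ⟨G1.mem_edgeSet.mpr hadj.symm, ?_⟩
                    have he : (⟨s(z₄, z₁), G1.mem_edgeSet.mpr hadj.symm⟩ : G1.edgeSet)
                        = ⟨s(u, v), G1.mem_edgeSet.mpr huv⟩ := Subtype.ext hsvu
                    rw [he]
                    exact hb
                rw [this]
                by_cases htb : c1 ⟨s(u, v), G1.mem_edgeSet.mpr huv⟩ = b <;> simp [htb]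
              rw [hn1]
              by_cases htb : c1 ⟨s(u, v), G1.mem_edgeSet.mpr huv⟩ = b <;> simp [htb]
            · -- proper cycle case
              have hcyc : (SimpleGraph.Walk.cons hadj p').IsCycle :=
                (SimpleGraph.Walk.cons_isCycle_iff p' hadj).mpr ⟨hppath, htri⟩
              have hG1 := hc1.2 (SimpleGraph.Walk.cons hadj p') hcyc
              have hne1 : cCount G1 c1 b (SimpleGraph.Walk.cons hadj p').edges ≠ 1 := by
                cases b
                · exact hG1.2
                · exact hG1.1
              rw [SimpleGraph.Walk.edges_cons, cCount_eq_countP] at hne1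
              simp only [List.countP_cons] at hne1
              have hval1 : (decide (∃ h : s(z₁, z₄) ∈ G1.edgeSet, c1 ⟨s(z₁, z₄), h⟩ = b))
                  = decide (c1 ⟨s(u, v), G1.mem_edgeSet.mpr huv⟩ = b) := by
                rw [decide_eq_decide]
                constructor
                · rintro ⟨hm, hc⟩
                  have he : (⟨s(z₁, z₄), hm⟩ : G1.edgeSet)
                      = ⟨s(u, v), G1.mem_edgeSet.mpr huv⟩ := Subtype.ext hsuv
                  rw [← he]
                  exact hc
                · intro hb
                  refine ⟨G1.mem_edgeSet.mpr hadj, ?_⟩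
                  have he : (⟨s(z₁, z₄), G1.mem_edgeSet.mpr hadj⟩ : G1.edgeSet)
                      = ⟨s(u, v), G1.mem_edgeSet.mpr huv⟩ := Subtype.ext hsuv
                  rw [he]
                  exact hb
              rw [hval1, ← cCount_eq_countP] at hne1
              by_cases htb : c1 ⟨s(u, v), G1.mem_edgeSet.mpr huv⟩ = b <;> simp [htb] at hne1 ⊢ <;> omega
    intro a w hw
    have main : ∀ b, cCount (glueTri G1 u v) c b w.edges ≠ 1 := by
      intro b
      by_cases hn : (none : Option V) ∈ w.support
      · have hperm := (w.rotate_edges none hn).perm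
        rw [cCount_eq_countP, ← hperm.countP_eq, ← cCount_eq_countP]
        exact key (w.rotate none hn) (hw.rotate hn) b
      · cases a with
        | none => exact absurd w.start_mem_support hn
        | some a' =>
          obtain ⟨w', hw'⟩ := pull w hn a' a' rfl rfl
          simp only [SimpleGraph.Walk.copy_rfl_rfl] at hw'
          have hwc : w'.IsCycle := by
            rw [← hw'] at hw
            exact (SimpleGraph.Walk.map_isCycle_iff_of_injective
              (f := glueHom G1 u v) (Option.some_injective V)).mp hw
          have hG1 := hc1.2 w' hwc
          have hne1 : cCount G1 c1 b w'.edges ≠ 1 := by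
            cases b
            · exact hG1.2
            · exact hG1.1
          have hedges : w.edges = w'.edges.map (Sym2.map some) := by
            rw [← hw', SimpleGraph.Walk.edges_copy, SimpleGraph.Walk.edges_map]; rfl
          rw [hedges, count_map G1 u v c1 c hold]
          exact hne1
    exact ⟨main true, main false⟩
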